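/- arXiv:2003.13713 — 4 statements merged into one kernel-verified Lean document; each statement's English description precedes it below -/
import Mathlib

section
/- Let G be a finite group acting on a K-algebra A by K-algebra automorphisms, let B = A^G be the invariant subalgebra, and let W be a right B-module. Equip the relative tensor product W ⊗_B A with the G-action through the second tensor factor, i.e. g • (w ⊗ a) = w ⊗ (g • a). Then the K-linear map W → (W ⊗_B A)^G, w ↦ w ⊗ 1, into the subspace of G-invariant elements, is bijective. -/
open scoped TensorProduct

/-- The invariant subalgebra `B = A^G` of a `K`-algebra `A` with a `G`-action by
`K`-algebra automorphisms. -/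
def fixedSubalgebra (K G A : Type) [Field K] [Group G] [Ring A] [Algebra K A]
    [MulSemiringAction G A] [SMulCommClass G K A] : Subalgebra K A where
  carrier := {a : A | ∀ g : G, g • a = a}
  mul_mem' := fun {x y} hx hy g => by rw [smul_mul', hx g, hy g]
  one_mem' := fun g => smul_one g
  add_mem' := fun {x y} hx hy g => by rw [smul_add, hx g, hy g]
  zero_mem' := fun g => smul_zero g
  algebraMap_mem' := fun r g => by
    rw [Algebra.algebraMap_eq_smul_one, smul_comm, smul_one]

/-- The relative tensor product `W ⊗_B A` of a right `B`-module `W` with `A` over the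
invariant subalgebra `B = A^G`, realized as the quotient of `W ⊗_K A` by the `K`-span of
the balancing relators `(w·b) ⊗ a - w ⊗ (b·a)`. -/
noncomputable abbrev indTensor (K G A : Type) [Field K] [Group G] [Ring A] [Algebra K A]
    [MulSemiringAction G A] [SMulCommClass G K A]
    (W : Type) [AddCommGroup W] [Module K W]
    [Module (↥(fixedSubalgebra K G A))ᵐᵒᵖ W] : Type :=
  (TensorProduct K W A) ⧸ (Submodule.span K {x : TensorProduct K W A |
    ∃ (w : W) (b : ↥(fixedSubalgebra K G A)) (a : A),
      x = (MulOpposite.op b • w) ⊗ₜ[K] a - w ⊗ₜ[K] ((b : A) * a)})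

section Aux

variable (K G A : Type) [Field K] [Group G] [Ring A] [Algebra K A]
  [MulSemiringAction G A] [SMulCommClass G K A]

/-- `a ↦ g • a` as a `K`-linear map. -/
def gLin (g : G) : A →ₗ[K] A where
  toFun := (g • ·)
  map_add' := smul_add g
  map_smul' c a := smul_comm g c a

theorem gLin_apply (g : G) (a : A) : gLin K G A g a = g • a := rfl

variable [Fintype G]

noncomputable def tauLin : A →ₗ[K] A :=
  (Fintype.card G : K)⁻¹ • ∑ g : G, gLin K G A g

theorem tauLin_apply (a : A) :
    tauLin K G A a = (Fintype.card G : K)⁻¹ • ∑ g : G, g • a := by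
  simp [tauLin, gLin]

theorem tauLin_mem (a : A) : tauLin K G A a ∈ fixedSubalgebra K G A := by
  intro h
  rw [tauLin_apply, smul_comm, Finset.smul_sum]
  congr 1
  apply Fintype.sum_equiv (Equiv.mulLeft h) _ _ (fun g => ?_)
  rw [smul_smul]; rfl

theorem tauLin_one [CharZero K] : tauLin K G A 1 = 1 := by
  rw [tauLin_apply]
  simp only [smul_eq_mul, mul_one, smul_one]
  rw [Finset.sum_const, Finset.card_univ, ← Nat.cast_smul_eq_nsmul K, smul_smul,
    inv_mul_cancel₀ (by exact_mod_cast Fintype.card_ne_zero), one_smul]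

theorem tauLin_mul_left (b : ↥(fixedSubalgebra K G A)) (a : A) :
    tauLin K G A ((b : A) * a) = (b : A) * tauLin K G A a := by
  rw [tauLin_apply, tauLin_apply, mul_smul_comm, Finset.mul_sum]
  congr 1
  refine Finset.sum_congr rfl fun g _ => ?_
  rw [smul_mul', b.2 g]

noncomputable def tauB : A →ₗ[K] ↥(fixedSubalgebra K G A) :=
  LinearMap.codRestrict (Subalgebra.toSubmodule (fixedSubalgebra K G A))
    (tauLin K G A) (tauLin_mem K G A)

theorem tauB_coe (a : A) : (tauB K G A a : A) = tauLin K G A a := rfl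

variable (W : Type) [AddCommGroup W] [Module K W]
  [Module (↥(fixedSubalgebra K G A))ᵐᵒᵖ W]
  [IsScalarTower K (↥(fixedSubalgebra K G A))ᵐᵒᵖ W]

theorem smul_comm_aux (c : K) (m : (↥(fixedSubalgebra K G A))ᵐᵒᵖ) (w : W) :
    m • c • w = c • m • w := by
  have h1 : c • w = (c • (1 : (↥(fixedSubalgebra K G A))ᵐᵒᵖ)) • w := by
    rw [smul_assoc, one_smul]
  rw [h1, ← mul_smul, mul_smul_comm, mul_one, smul_assoc]

noncomputable def phiT : TensorProduct K W A →ₗ[K] W :=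
  TensorProduct.lift (LinearMap.mk₂ K
    (fun w a => MulOpposite.op (tauB K G A a) • w)
    (fun w w' a => smul_add _ w w')
    (fun c w a => smul_comm_aux K G A W c _ w)
    (fun w a a' => by rw [map_add, MulOpposite.op_add, add_smul])
    (fun c w a => by rw [map_smul, MulOpposite.op_smul, smul_assoc]))

theorem phiT_tmul (w : W) (a : A) :
    phiT K G A W (w ⊗ₜ[K] a) = MulOpposite.op (tauB K G A a) • w := rfl

end Aux

section Aux2

variable (K G A : Type) [Field K] [Group G] [Ring A] [Algebra K A]
  [MulSemiringAction G A] [SMulCommClass G K A]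
  (W : Type) [AddCommGroup W] [Module K W]
  [Module (↥(fixedSubalgebra K G A))ᵐᵒᵖ W]

noncomputable abbrev relSub : Submodule K (TensorProduct K W A) :=
  Submodule.span K {x : TensorProduct K W A |
    ∃ (w : W) (b : ↥(fixedSubalgebra K G A)) (a : A),
      x = (MulOpposite.op b • w) ⊗ₜ[K] a - w ⊗ₜ[K] ((b : A) * a)}

noncomputable def rhoQ (g : G) : indTensor K G A W →ₗ[K] indTensor K G A W :=
  Submodule.mapQ _ _ (LinearMap.lTensor W (gLin K G A g)) (by
    refine Submodule.span_le.2 ?_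
    rintro x ⟨w, b, a, rfl⟩
    have hb : g • ((b : A) * a) = (b : A) * (g • a) := by
      rw [smul_mul', b.2 g]
    simp only [Submodule.mem_comap, SetLike.mem_coe, map_sub, LinearMap.lTensor_tmul,
      gLin_apply, hb]
    exact Submodule.subset_span ⟨w, b, g • a, rfl⟩)

theorem rhoQ_mk (g : G) (w : W) (a : A) :
    rhoQ K G A W g (Submodule.Quotient.mk (w ⊗ₜ[K] a))
      = Submodule.Quotient.mk (w ⊗ₜ[K] (g • a)) := by
  rw [rhoQ, Submodule.mapQ_apply, LinearMap.lTensor_tmul]; rfl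

noncomputable def iota : W →ₗ[K] indTensor K G A W :=
  (relSub K G A W).mkQ.comp ((TensorProduct.mk K W A).flip 1)

theorem iota_apply (w : W) :
    iota K G A W w = Submodule.Quotient.mk (w ⊗ₜ[K] (1 : A)) := rfl

theorem mk_relation (b : ↥(fixedSubalgebra K G A)) (w : W) (a : A) :
    (Submodule.Quotient.mk ((MulOpposite.op b • w) ⊗ₜ[K] a) : indTensor K G A W)
      = Submodule.Quotient.mk (w ⊗ₜ[K] ((b : A) * a)) := by
  rw [Submodule.Quotient.eq]
  exact Submodule.subset_span ⟨w, b, a, rfl⟩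

variable [Fintype G] [IsScalarTower K (↥(fixedSubalgebra K G A))ᵐᵒᵖ W]

noncomputable def phiQ : indTensor K G A W →ₗ[K] W :=
  Submodule.liftQ _ (phiT K G A W) (by
    refine Submodule.span_le.2 ?_
    rintro x ⟨w, b, a, rfl⟩
    simp only [SetLike.mem_coe, LinearMap.mem_ker, map_sub, phiT_tmul]
    rw [← mul_smul, ← MulOpposite.op_mul]
    have : (b : A) * (tauB K G A a : A) = (tauB K G A ((b:A) * a) : A) := by
      rw [tauB_coe, tauB_coe, tauLin_mul_left]
    rw [show ((b : ↥(fixedSubalgebra K G A)) * tauB K G A a : ↥(fixedSubalgebra K G A))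
          = tauB K G A ((b:A) * a) from Subtype.ext (by
        rw [← this]; rfl), sub_self]
    )

theorem phiQ_mk (w : W) (a : A) :
    phiQ K G A W (Submodule.Quotient.mk (w ⊗ₜ[K] a)) = MulOpposite.op (tauB K G A a) • w :=
  rfl

theorem average_eq [CharZero K] :
    ((Fintype.card G : K)⁻¹ • ∑ g : G, rhoQ K G A W g)
      = (iota K G A W).comp (phiQ K G A W) := by
  apply Submodule.linearMap_qext
  apply TensorProduct.ext'
  intro w a
  simp only [LinearMap.comp_apply, Submodule.mkQ_apply, LinearMap.smul_apply,
    LinearMap.sum_apply, rhoQ_mk, phiQ_mk, iota_apply]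
  rw [mk_relation, mul_one, tauB_coe]
  have h1 : ∑ g : G, (Submodule.Quotient.mk (w ⊗ₜ[K] (g • a)) : indTensor K G A W)
      = Submodule.Quotient.mk (w ⊗ₜ[K] (∑ g : G, g • a)) := by
    rw [TensorProduct.tmul_sum]
    exact (map_sum (relSub K G A W).mkQ _ _).symm
  rw [h1, ← Submodule.Quotient.mk_smul, tauLin_apply, TensorProduct.tmul_smul]

end Aux2

/-- For a finite group `G` acting on a `K`-algebra `A` by `K`-algebra
automorphisms with invariant subalgebra `B = A^G`, and a right `B`-module `W`, the
`K`-linear map `W → (W ⊗_B A)^G`, `w ↦ w ⊗ 1`, into the subspace of invariants for the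
`G`-action through the second tensor factor, is bijective. -/
theorem stmt_6 (K G A : Type) [Field K] [CharZero K] [Group G] [Finite G]
    [Ring A] [Algebra K A] [MulSemiringAction G A] [SMulCommClass G K A]
    (W : Type) [AddCommGroup W] [Module K W]
    [Module (↥(fixedSubalgebra K G A))ᵐᵒᵖ W]
    [IsScalarTower K (↥(fixedSubalgebra K G A))ᵐᵒᵖ W] :
    ∃ ρ : G → (indTensor K G A W →ₗ[K] indTensor K G A W),
      (∀ (g : G) (w : W) (a : A),
        ρ g (Submodule.Quotient.mk (w ⊗ₜ[K] a))
          = Submodule.Quotient.mk (w ⊗ₜ[K] (g • a))) ∧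
      Function.Injective (fun w : W =>
        (Submodule.Quotient.mk (w ⊗ₜ[K] (1 : A)) : indTensor K G A W)) ∧
      Set.range (fun w : W =>
          (Submodule.Quotient.mk (w ⊗ₜ[K] (1 : A)) : indTensor K G A W))
        = {t : indTensor K G A W | ∀ g : G, ρ g t = t} := by
  cases nonempty_fintype G
  refine ⟨fun g => rhoQ K G A W g, fun g w a => rhoQ_mk K G A W g w a, ?_, ?_⟩
  · intro w w' h
    have h2 := congrArg (phiQ K G A W) h
    simp only [phiQ_mk] at h2
    have ht1 : tauB K G A (1 : A) = 1 :=
      Subtype.ext (by rw [tauB_coe, tauLin_one]; exact (OneMemClass.coe_one _).symm)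
    rwa [ht1, MulOpposite.op_one, one_smul, one_smul] at h2
  · ext t
    simp only [Set.mem_range, Set.mem_setOf_eq]
    constructor
    · rintro ⟨w, rfl⟩ g
      rw [rhoQ_mk, smul_one]
    · intro ht
      refine ⟨phiQ K G A W t, ?_⟩
      have h := congrFun (congrArg DFunLike.coe (average_eq K G A W)) t
      simp only [LinearMap.smul_apply, LinearMap.sum_apply, LinearMap.comp_apply] at h
      rw [Finset.sum_congr rfl (fun g _ => ht g), Finset.sum_const, Finset.card_univ,
        ← Nat.cast_smul_eq_nsmul K, smul_smul,
        inv_mul_cancel₀ (by exact_mod_cast Fintype.card_ne_zero : (Fintype.card G : K) ≠ 0),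
        one_smul] at h
      rw [← iota_apply]
      exact h.symm
end

section
/- Let G be a finite group acting on a K-algebra A by K-algebra automorphisms and let B = A^G be the invariant subalgebra. Then the following are equivalent: (i) the canonical Galois map β : A ⊗_B A → (G → A), a ⊗ a′ ↦ (g ↦ a · (g • a′)), is bijective; (ii) for every G-equivariant right A-module V, the evaluation map V^G ⊗_B A → V, v ⊗ a ↦ v · a, is bijective. -/
open scoped TensorProduct

/-- A `G`-equivariant right `A`-module: a right `A`-module `V` (a module over `Aᵐᵒᵖ`)
together with a `K`-linear `G`-action `ρ` satisfying `g • (v·a) = (g•v)·(g•a)`. -/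
structure EquivariantModule (K A G : Type) [Field K] [Ring A] [Algebra K A] [Group G]
    [MulSemiringAction G A] [SMulCommClass G K A] where
  V : Type
  [isAddCommGroup : AddCommGroup V]
  [isModuleK : Module K V]
  [isModuleA : Module Aᵐᵒᵖ V]
  [isTower : IsScalarTower K Aᵐᵒᵖ V]
  ρ : Representation K G V
  ρ_smul : ∀ (g : G) (a : A) (v : V),
    ρ g (MulOpposite.op a • v) = MulOpposite.op (g • a) • ρ g v

attribute [instance] EquivariantModule.isAddCommGroup EquivariantModule.isModuleK
  EquivariantModule.isModuleA EquivariantModule.isTower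

/-- The relative tensor product `A ⊗_B A` over the invariant subalgebra `B = A^G`,
realized as the quotient of `A ⊗_K A` by the `K`-span of the balancing relators
`(a·b) ⊗ a' - a ⊗ (b·a')` for `G`-invariant `b`. -/
noncomputable abbrev galTensor (K A G : Type) [Field K] [Ring A] [Algebra K A] [Group G]
    [MulSemiringAction G A] : Type :=
  (TensorProduct K A A) ⧸ (Submodule.span K {x : TensorProduct K A A |
    ∃ (a a' b : A) (_ : ∀ g : G, g • b = b),
      x = (a * b) ⊗ₜ[K] a' - a ⊗ₜ[K] (b * a')})

/-- The relative tensor product `V^G ⊗_B A` of the invariants of a `G`-equivariant right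
`A`-module `V` with `A` over the invariant subalgebra `B = A^G`, realized as a quotient of
`V^G ⊗_K A` by the `K`-span of the balancing relators. -/
noncomputable abbrev coinvTensor (K A G : Type) [Field K] [Ring A] [Algebra K A] [Group G]
    [MulSemiringAction G A] [SMulCommClass G K A] (X : EquivariantModule K A G) : Type :=
  (TensorProduct K X.ρ.invariants A) ⧸ (Submodule.span K
    {x : TensorProduct K X.ρ.invariants A |
      ∃ (v : X.V) (hv : v ∈ X.ρ.invariants) (b a : A) (_ : ∀ g : G, g • b = b)
        (hbv : MulOpposite.op b • v ∈ X.ρ.invariants),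
        x = (⟨MulOpposite.op b • v, hbv⟩ : X.ρ.invariants) ⊗ₜ[K] a
              - (⟨v, hv⟩ : X.ρ.invariants) ⊗ₜ[K] (b * a)})

open MulOpposite

set_option linter.unusedSectionVars false
set_option linter.unusedVariables false

namespace Stmt7

variable (K A G : Type) [Field K] [Ring A] [Algebra K A] [Group G]
  [MulSemiringAction G A] [SMulCommClass G K A]

/-- The canonical Galois map on `A ⊗[K] A`. -/
noncomputable def betaRaw : TensorProduct K A A →ₗ[K] (G → A) :=
  TensorProduct.lift <| LinearMap.mk₂ K (fun a a' => fun g => a * (g • a'))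
    (fun a b a' => by funext g; exact add_mul _ _ _)
    (fun k a a' => by funext g; exact smul_mul_assoc k a _)
    (fun a a' b' => by funext g; rw [smul_add, mul_add]; rfl)
    (fun k a a' => by funext g; rw [smul_comm g k a', mul_smul_comm]; rfl)

@[simp] lemma betaRaw_tmul (a a' : A) :
    betaRaw K A G (a ⊗ₜ[K] a') = fun g => a * (g • a') := rfl

/-- The flipped Galois pairing `x ⊗ y ↦ (g • x) * y`. -/
noncomputable def flipMap (g : G) : TensorProduct K A A →ₗ[K] A :=
  TensorProduct.lift <| LinearMap.mk₂ K (fun x y => (g • x) * y)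
    (fun a b c => by rw [smul_add, add_mul])
    (fun k a b => by rw [smul_comm, smul_mul_assoc])
    (fun a b c => by rw [mul_add])
    (fun k a b => by rw [mul_smul_comm])

@[simp] lemma flipMap_tmul (g : G) (x y : A) :
    flipMap K A G g (x ⊗ₜ[K] y) = (g • x) * y := rfl

lemma flipMap_eq_betaRaw (g : G) (w : TensorProduct K A A) :
    flipMap K A G g w = g • (betaRaw K A G w g⁻¹) := by
  have h : flipMap K A G g =
      (DistribMulAction.toLinearMap K A g) ∘ₗ (LinearMap.proj g⁻¹) ∘ₗ betaRaw K A G := by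
    apply TensorProduct.ext'
    intro x y
    simp only [LinearMap.comp_apply, betaRaw_tmul, LinearMap.proj_apply,
      DistribMulAction.toLinearMap, DistribSMul.toLinearMap_apply, flipMap_tmul]
    rw [smul_mul', smul_inv_smul]
  rw [h]; rfl


variable {K A G}

/-- The raw evaluation map `V^G ⊗[K] A → V`. -/
noncomputable def evRaw (X : EquivariantModule K A G) :
    TensorProduct K X.ρ.invariants A →ₗ[K] X.V :=
  TensorProduct.lift <| LinearMap.mk₂ K
    (fun (sv : X.ρ.invariants) (a : A) => op a • (sv : X.V))
    (fun s t a => by rw [Submodule.coe_add, smul_add])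
    (fun k s a => by rw [Submodule.coe_smul, smul_comm])
    (fun s a b => by rw [op_add, add_smul])
    (fun k s a => by rw [op_smul, smul_assoc])

/-- The canonical evaluation map on the relative tensor product. -/
noncomputable def evX (X : EquivariantModule K A G) :
    coinvTensor K A G X →ₗ[K] X.V :=
  Submodule.liftQ _ (evRaw X) (by
    rw [Submodule.span_le]
    rintro x ⟨v, hv, b, a, hb, hbv, rfl⟩
    simp only [SetLike.mem_coe, LinearMap.mem_ker, map_sub]
    have h1 : evRaw X ((⟨op b • v, hbv⟩ : X.ρ.invariants) ⊗ₜ[K] a) = op a • (op b • v) := rfl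
    have h2 : evRaw X ((⟨v, hv⟩ : X.ρ.invariants) ⊗ₜ[K] (b * a)) = op (b * a) • v := rfl
    rw [h1, h2, op_mul, mul_smul, sub_self])

lemma evX_mk (X : EquivariantModule K A G) (sv : X.ρ.invariants) (a : A) :
    evX X (Submodule.Quotient.mk (sv ⊗ₜ[K] a)) = op a • (sv : X.V) := rfl

section Fin
variable [Fintype G] [DecidableEq G]

variable (K A G) in
/-- Trace on `A`. -/
noncomputable def trA : A →ₗ[K] A := ∑ g : G, DistribMulAction.toLinearMap K A g

lemma trA_apply (a : A) : trA K A G a = ∑ g : G, g • a := by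
  simp [trA, DistribMulAction.toLinearMap, DistribSMul.toLinearMap_apply]

lemma trA_invariant (h : G) (a : A) : h • trA K A G a = trA K A G a := by
  rw [trA_apply, Finset.smul_sum]
  exact Fintype.sum_equiv (Equiv.mulLeft h) _ _ (fun g => by
    simp [smul_smul, Equiv.mulLeft])

/-- Trace on an equivariant module. -/
noncomputable def trV (X : EquivariantModule K A G) : X.V →ₗ[K] X.V := ∑ g : G, X.ρ g

lemma trV_apply (X : EquivariantModule K A G) (v : X.V) :
    trV X v = ∑ g : G, X.ρ g v := by simp [trV]

lemma trV_mem (X : EquivariantModule K A G) (v : X.V) : trV X v ∈ X.ρ.invariants := by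
  rw [Representation.mem_invariants]
  intro h
  rw [trV_apply, map_sum]
  exact Fintype.sum_equiv (Equiv.mulLeft h) _ _ (fun g => by
    simp only [Equiv.coe_mulLeft, ← Module.End.mul_apply, ← map_mul])

/-- Trace corestricted to the invariants. -/
noncomputable def trV' (X : EquivariantModule K A G) : X.V →ₗ[K] X.ρ.invariants :=
  LinearMap.codRestrict _ (trV X) (trV_mem X)


/-- The map `x ⊗ y ↦ [tr(x·v) ⊗ y]` into the relative tensor product. -/
noncomputable def Psi (X : EquivariantModule K A G) (v : X.V) :
    TensorProduct K A A →ₗ[K] coinvTensor K A G X :=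
  TensorProduct.lift <| LinearMap.mk₂ K
    (fun x y => Submodule.Quotient.mk (trV' X (op x • v) ⊗ₜ[K] y))
    (fun x₁ x₂ y => by
      rw [op_add, add_smul, map_add, TensorProduct.add_tmul, Submodule.Quotient.mk_add])
    (fun k x y => by
      rw [op_smul, smul_assoc, map_smul, ← TensorProduct.smul_tmul', Submodule.Quotient.mk_smul])
    (fun x y₁ y₂ => by
      rw [TensorProduct.tmul_add, Submodule.Quotient.mk_add])
    (fun k x y => by
      rw [TensorProduct.tmul_smul, Submodule.Quotient.mk_smul])

@[simp] lemma Psi_tmul (X : EquivariantModule K A G) (v : X.V) (x y : A) :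
    Psi X v (x ⊗ₜ[K] y) = Submodule.Quotient.mk (trV' X (op x • v) ⊗ₜ[K] y) := rfl

/-- Right multiplication by `c` on `u`, as a linear map in `c`. -/
noncomputable def opSmulMap (X : EquivariantModule K A G) (u : X.V) : A →ₗ[K] X.V where
  toFun c := op c • u
  map_add' a b := by rw [op_add, add_smul]
  map_smul' k a := by rw [op_smul, smul_assoc]; rfl

@[simp] lemma opSmulMap_apply (X : EquivariantModule K A G) (u : X.V) (c : A) :
    opSmulMap X u c = op c • u := rfl

lemma evX_comp_Psi (X : EquivariantModule K A G) (v : X.V) :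
    (evX X).comp (Psi X v) = ∑ g : G, (opSmulMap X (X.ρ g v)).comp (flipMap K A G g) := by
  apply TensorProduct.ext'
  intro x y
  simp only [LinearMap.comp_apply, LinearMap.sum_apply, Psi_tmul, flipMap_tmul,
    opSmulMap_apply, evX_mk]
  rw [show ((trV' X (op x • v) : X.ρ.invariants) : X.V) = trV X (op x • v) from rfl,
    trV_apply, Finset.smul_sum]
  exact Finset.sum_congr rfl (fun g _ => by rw [X.ρ_smul, ← mul_smul, ← op_mul])

lemma evX_Psi (X : EquivariantModule K A G) (w : TensorProduct K A A)
    (hw : ∀ g : G, flipMap K A G g w = if g = 1 then 1 else 0) (v : X.V) :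
    evX X (Psi X v w) = v := by
  have h := DFunLike.congr_fun (evX_comp_Psi X v) w
  simp only [LinearMap.comp_apply, LinearMap.sum_apply, opSmulMap_apply] at h
  rw [h, Fintype.sum_eq_single (1 : G)
    (fun b hb => by rw [hw b, if_neg hb, op_zero, zero_smul])]
  rw [hw 1, if_pos rfl, op_one, one_smul, map_one, Module.End.one_apply]

/-- `a ↦ [s ⊗ a]`. -/
noncomputable def mkT (X : EquivariantModule K A G) (s : X.ρ.invariants) :
    A →ₗ[K] coinvTensor K A G X :=
  (Submodule.mkQ _).comp ((TensorProduct.mk K X.ρ.invariants A) s)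

@[simp] lemma mkT_apply (X : EquivariantModule K A G) (s : X.ρ.invariants) (a : A) :
    mkT X s a = Submodule.Quotient.mk (s ⊗ₜ[K] a) := rfl

lemma trV'_op_smul (X : EquivariantModule K A G) (v : X.V) (hv : v ∈ X.ρ.invariants) (c : A) :
    ((trV' X (op c • v) : X.ρ.invariants) : X.V) = op (trA K A G c) • v := by
  rw [show ((trV' X (op c • v) : X.ρ.invariants) : X.V) = trV X (op c • v) from rfl,
    trV_apply, trA_apply, Finset.op_sum, Finset.sum_smul]
  exact Finset.sum_congr rfl (fun g _ => by
    rw [X.ρ_smul, ((X.ρ.mem_invariants _).mp hv) g])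

lemma op_trA_smul_mem (X : EquivariantModule K A G) (v : X.V) (hv : v ∈ X.ρ.invariants)
    (c : A) : op (trA K A G c) • v ∈ X.ρ.invariants := by
  rw [Representation.mem_invariants]
  intro g
  rw [X.ρ_smul, trA_invariant, ((X.ρ.mem_invariants _).mp hv) g]

lemma mk_rel (X : EquivariantModule K A G) (v : X.V) (hv : v ∈ X.ρ.invariants) (b : A)
    (hb : ∀ g : G, g • b = b) (hbv : op b • v ∈ X.ρ.invariants) (y : A) :
    (Submodule.Quotient.mk ((⟨op b • v, hbv⟩ : X.ρ.invariants) ⊗ₜ[K] y) :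
        coinvTensor K A G X)
      = Submodule.Quotient.mk ((⟨v, hv⟩ : X.ρ.invariants) ⊗ₜ[K] (b * y)) := by
  rw [Submodule.Quotient.eq]
  exact Submodule.subset_span ⟨v, hv, b, y, hb, hbv, rfl⟩

lemma Psi_op_smul (X : EquivariantModule K A G) (v : X.V) (hv : v ∈ X.ρ.invariants) (a : A) :
    Psi X (op a • v) = (mkT X ⟨v, hv⟩).comp
      (∑ g : G, (LinearMap.mulLeft K ((g • a : A))).comp (flipMap K A G g)) := by
  apply TensorProduct.ext'
  intro x y
  simp only [LinearMap.comp_apply, LinearMap.sum_apply, Psi_tmul, flipMap_tmul,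
    LinearMap.mulLeft_apply, mkT_apply]
  rw [show op x • op a • v = op (a * x) • v from by rw [← mul_smul, ← op_mul]]
  rw [show trV' X (op (a * x) • v)
      = (⟨op (trA K A G (a * x)) • v, op_trA_smul_mem X v hv (a * x)⟩ : X.ρ.invariants)
    from Subtype.ext (trV'_op_smul X v hv (a * x))]
  rw [mk_rel X v hv _ (fun g => trA_invariant g (a * x)) _ y]
  congr 1
  rw [trA_apply, Finset.sum_mul]
  exact congrArg _ (Finset.sum_congr rfl (fun g _ => by rw [smul_mul', mul_assoc]))

lemma Psi_op_smul_w (X : EquivariantModule K A G) (w : TensorProduct K A A)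
    (hw : ∀ g : G, flipMap K A G g w = if g = 1 then 1 else 0)
    (v : X.V) (hv : v ∈ X.ρ.invariants) (a : A) :
    Psi X (op a • v) w
      = Submodule.Quotient.mk ((⟨v, hv⟩ : X.ρ.invariants) ⊗ₜ[K] a) := by
  rw [DFunLike.congr_fun (Psi_op_smul X v hv a) w]
  simp only [LinearMap.comp_apply, LinearMap.sum_apply, LinearMap.mulLeft_apply, mkT_apply]
  congr 1
  rw [Fintype.sum_eq_single (1 : G) (fun b hb => by rw [hw b, if_neg hb, mul_zero])]
  rw [hw 1, if_pos rfl, mul_one, one_smul]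


/-- `v ↦ Psi X v w` as a linear map. -/
noncomputable def Philin (X : EquivariantModule K A G) (w : TensorProduct K A A) :
    X.V →ₗ[K] coinvTensor K A G X where
  toFun v := Psi X v w
  map_add' v v' := by
    have h : Psi X (v + v') = Psi X v + Psi X v' := by
      apply TensorProduct.ext'
      intro x y
      simp only [Psi_tmul, LinearMap.add_apply]
      rw [smul_add, map_add, TensorProduct.add_tmul, Submodule.Quotient.mk_add]
    rw [h, LinearMap.add_apply]
  map_smul' k v := by
    have h : Psi X (k • v) = k • Psi X v := by
      apply TensorProduct.ext'
      intro x y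
      simp only [Psi_tmul, LinearMap.smul_apply]
      rw [smul_comm (op x) k v, map_smul, ← TensorProduct.smul_tmul',
        Submodule.Quotient.mk_smul]
    rw [h, LinearMap.smul_apply, RingHom.id_apply]

lemma Philin_comp_evX (X : EquivariantModule K A G) (w : TensorProduct K A A)
    (hw : ∀ g : G, flipMap K A G g w = if g = 1 then 1 else 0) :
    (Philin X w).comp (evX X) = LinearMap.id := by
  apply Submodule.linearMap_qext
  apply TensorProduct.ext'
  rintro ⟨v, hv⟩ a
  simp only [LinearMap.comp_apply, Submodule.mkQ_apply, LinearMap.id_apply]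
  rw [evX_mk]
  exact Psi_op_smul_w X w hw v hv a

end Fin

section Reg

variable (K A G)

/-- The regular equivariant module `G → A` with twisted right `A`-action. -/
def Reg (K' A' G' : Type) : Type := G' → A'

instance : AddCommGroup (Reg K A G) := inferInstanceAs (AddCommGroup (G → A))
instance : Module K (Reg K A G) := inferInstanceAs (Module K (G → A))

instance : Module Aᵐᵒᵖ (Reg K A G) where
  smul m f := fun g => f g * (g • m.unop)
  one_smul f := by funext g; show f g * (g • (1 : Aᵐᵒᵖ).unop) = f g; rw [unop_one, smul_one, mul_one]
  mul_smul m n f := by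
    funext g
    show f g * (g • (n.unop * m.unop)) = (f g * (g • n.unop)) * (g • m.unop)
    rw [smul_mul', mul_assoc]
  smul_zero m := by funext g; show (0 : A) * _ = 0; rw [zero_mul]
  smul_add m f f' := by
    funext g
    show (f g + f' g) * _ = f g * _ + f' g * _
    rw [add_mul]
  add_smul m n f := by
    funext g
    show f g * (g • (m.unop + n.unop)) = f g * (g • m.unop) + f g * (g • n.unop)
    rw [smul_add, mul_add]
  zero_smul f := by funext g; show f g * (g • (0 : A)) = 0; rw [smul_zero, mul_zero]

lemma reg_smul_apply (m : Aᵐᵒᵖ) (f : Reg K A G) (g : G) :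
    (m • f) g = f g * (g • m.unop) := rfl

instance : IsScalarTower K Aᵐᵒᵖ (Reg K A G) where
  smul_assoc k m f := by
    funext g
    show f g * (g • (k • m).unop) = k • (f g * (g • m.unop))
    rw [unop_smul, smul_comm g k, mul_smul_comm]

/-- The right regular `G`-representation on `Reg`. -/
def regρ : Representation K G (Reg K A G) where
  toFun g :=
    { toFun := fun f => fun h => f (h * g)
      map_add' := fun _ _ => rfl
      map_smul' := fun _ _ => rfl }
  map_one' := by
    refine LinearMap.ext (fun f => ?_)
    funext h
    show f (h * 1) = f h
    rw [mul_one]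
  map_mul' g₁ g₂ := by
    refine LinearMap.ext (fun f => ?_)
    funext h
    show f (h * (g₁ * g₂)) = f (h * g₁ * g₂)
    rw [mul_assoc]

/-- The regular equivariant module. -/
def X₀ : EquivariantModule K A G where
  V := Reg K A G
  ρ := regρ K A G
  ρ_smul g a f := by
    funext h
    show (op a • f) (h * g) = ((regρ K A G g) f) h * (h • (g • a))
    rw [reg_smul_apply, smul_smul]
    rfl

/-- The constant function, as an element of `Reg`. -/
def constReg (a : A) : Reg K A G := fun _ => a

lemma const_mem_invariants (a : A) :
    constReg K A G a ∈ (regρ K A G).invariants := by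
  rw [Representation.mem_invariants]
  intro g
  rfl

lemma invariant_apply_eq (f : Reg K A G) (hf : f ∈ (regρ K A G).invariants) (g : G) :
    f g = f 1 := by
  have := congrFun (((regρ K A G).mem_invariants f).mp hf g) 1
  show f g = f 1
  rw [← this]
  show f g = f (1 * g)
  rw [one_mul]

/-- Constants, as a linear map into the invariants. -/
def cmap : A →ₗ[K] (X₀ K A G).ρ.invariants where
  toFun a := ⟨constReg K A G a, const_mem_invariants K A G a⟩
  map_add' a b := rfl
  map_smul' k a := rfl

/-- Evaluation at `1`, as a linear map out of the invariants. -/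
def dmap : ((X₀ K A G).ρ.invariants : Type) →ₗ[K] A where
  toFun sv := sv.val 1
  map_add' a b := rfl
  map_smul' k a := rfl


lemma op_smul_const (a b : A) (hb : ∀ g : G, g • b = b) :
    op b • constReg K A G a = constReg K A G (a * b) := by
  funext g
  show a * (g • b) = a * b
  rw [hb g]

/-- The comparison map `A ⊗_B A → (X₀)^G ⊗_B A`. -/
noncomputable def Theta : galTensor K A G →ₗ[K] coinvTensor K A G (X₀ K A G) :=
  Submodule.liftQ _
    ((Submodule.mkQ _).comp (TensorProduct.map (cmap K A G) LinearMap.id)) (by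
    rw [Submodule.span_le]
    rintro x ⟨a, a', b, hb, rfl⟩
    simp only [SetLike.mem_coe, LinearMap.mem_ker, map_sub, LinearMap.comp_apply,
      TensorProduct.map_tmul, LinearMap.id_apply, Submodule.mkQ_apply]
    rw [← Submodule.Quotient.mk_sub, Submodule.Quotient.mk_eq_zero]
    have hbv : op b • constReg K A G a ∈ (regρ K A G).invariants := by
      rw [op_smul_const K A G a b hb]
      exact const_mem_invariants K A G (a * b)
    refine Submodule.subset_span
      ⟨constReg K A G a, const_mem_invariants K A G a, b, a', hb, hbv, ?_⟩
    rw [show cmap K A G (a * b) = (⟨op b • constReg K A G a, hbv⟩ : (X₀ K A G).ρ.invariants)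
        from Subtype.ext (op_smul_const K A G a b hb).symm]
    rfl)

/-- The comparison map `(X₀)^G ⊗_B A → A ⊗_B A`. -/
noncomputable def Theta' : coinvTensor K A G (X₀ K A G) →ₗ[K] galTensor K A G :=
  Submodule.liftQ _
    ((Submodule.mkQ _).comp (TensorProduct.map (dmap K A G) LinearMap.id)) (by
    rw [Submodule.span_le]
    rintro x ⟨v, hv, b, a, hb, hbv, rfl⟩
    simp only [SetLike.mem_coe, LinearMap.mem_ker, map_sub, LinearMap.comp_apply,
      TensorProduct.map_tmul, LinearMap.id_apply, Submodule.mkQ_apply]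
    rw [← Submodule.Quotient.mk_sub, Submodule.Quotient.mk_eq_zero]
    have h1 : dmap K A G ⟨op b • v, hbv⟩ = dmap K A G ⟨v, hv⟩ * b := by
      show v 1 * ((1 : G) • b) = v 1 * b
      rw [one_smul]
    refine Submodule.subset_span ⟨dmap K A G ⟨v, hv⟩, a, b, hb, ?_⟩
    rw [h1])

lemma theta'_theta : (Theta' K A G).comp (Theta K A G) = LinearMap.id := by
  apply Submodule.linearMap_qext
  apply TensorProduct.ext'
  intro a a'
  rfl

lemma theta_theta' : (Theta K A G).comp (Theta' K A G) = LinearMap.id := by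
  apply Submodule.linearMap_qext
  apply TensorProduct.ext'
  rintro ⟨v, hv⟩ a
  show Submodule.Quotient.mk ((cmap K A G (dmap K A G ⟨v, hv⟩)) ⊗ₜ[K] a)
    = Submodule.Quotient.mk ((⟨v, hv⟩ : (X₀ K A G).ρ.invariants) ⊗ₜ[K] a)
  rw [show cmap K A G (dmap K A G ⟨v, hv⟩) = ⟨v, hv⟩ from
    Subtype.ext (funext fun g => (invariant_apply_eq K A G v hv g).symm)]

end Reg
end Stmt7

open Stmt7

/-- For a finite group `G` acting on a `K`-algebra `A` by `K`-algebra
automorphisms with `B = A^G`, the canonical Galois map `β : A ⊗_B A → (G → A)`,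
`a ⊗ a' ↦ (g ↦ a·(g • a'))`, is bijective if and only if for every `G`-equivariant right
`A`-module `V` the evaluation map `V^G ⊗_B A → V`, `v ⊗ a ↦ v·a`, is bijective. -/
theorem stmt_7 (K A G : Type) [Field K] [CharZero K] [Ring A] [Algebra K A]
    [Group G] [Finite G] [MulSemiringAction G A] [SMulCommClass G K A] :
    (∃ β : galTensor K A G →ₗ[K] (G → A),
        (∀ (a a' : A) (g : G),
          β (Submodule.Quotient.mk (a ⊗ₜ[K] a')) g = a * (g • a')) ∧
        Function.Bijective β) ↔
    (∀ X : EquivariantModule K A G,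
        ∃ ev : coinvTensor K A G X →ₗ[K] X.V,
          (∀ (v : X.V) (hv : v ∈ X.ρ.invariants) (a : A),
            ev (Submodule.Quotient.mk ((⟨v, hv⟩ : X.ρ.invariants) ⊗ₜ[K] a))
              = MulOpposite.op a • v) ∧
          Function.Bijective ev) := by

  constructor
  · rintro ⟨β, hβ, hbij⟩ X
    haveI := Fintype.ofFinite G
    haveI := Classical.decEq G
    have hfact : ∀ u : TensorProduct K A A,
        β (Submodule.Quotient.mk u) = betaRaw K A G u := by
      have h : β.comp (Submodule.mkQ _) = betaRaw K A G := by
        apply TensorProduct.ext'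
        intro a a'
        funext g
        simp only [LinearMap.comp_apply, Submodule.mkQ_apply, betaRaw_tmul]
        exact hβ a a' g
      intro u
      exact DFunLike.congr_fun h u
    obtain ⟨t, ht⟩ := hbij.2 (fun g => if g = 1 then (1 : A) else 0)
    obtain ⟨w, rfl⟩ := Submodule.Quotient.mk_surjective _ t
    have hw : ∀ g : G, flipMap K A G g w = if g = 1 then 1 else 0 := by
      intro g
      rw [flipMap_eq_betaRaw, ← hfact w, ht]
      by_cases h : g = 1
      · subst h; simp
      · rw [show (fun g : G => if g = 1 then (1 : A) else 0) g⁻¹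
            = if g⁻¹ = 1 then (1 : A) else 0 from rfl,
          if_neg ((not_congr inv_eq_one).mpr h), if_neg h, smul_zero]
    refine ⟨evX X, fun v hv a => evX_mk X ⟨v, hv⟩ a, ?_⟩
    rw [Function.bijective_iff_has_inverse]
    exact ⟨fun v => Psi X v w,
      fun z => DFunLike.congr_fun (Philin_comp_evX X w hw) z,
      fun v => evX_Psi X w hw v⟩
  · intro h
    obtain ⟨ev, hev, hbij⟩ := h (X₀ K A G)
    refine ⟨ev.comp (Theta K A G), ?_, ?_⟩
    · intro a a' g
      have h0 : (ev.comp (Theta K A G)) (Submodule.Quotient.mk (a ⊗ₜ[K] a'))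
          = MulOpposite.op a' • constReg K A G a := by
        rw [LinearMap.comp_apply]
        rw [show Theta K A G (Submodule.Quotient.mk (a ⊗ₜ[K] a'))
            = Submodule.Quotient.mk ((cmap K A G a) ⊗ₜ[K] a') from rfl]
        rw [show (cmap K A G a)
            = (⟨constReg K A G a, const_mem_invariants K A G a⟩ :
                (X₀ K A G).ρ.invariants) from rfl]
        exact hev (constReg K A G a) (const_mem_invariants K A G a) a'
      exact (congrFun h0 g).trans rfl
    · refine hbij.comp ?_
      rw [Function.bijective_iff_has_inverse]
      exact ⟨Theta' K A G,
        fun z => DFunLike.congr_fun (theta'_theta K A G) z,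
        fun z => DFunLike.congr_fun (theta_theta' K A G) z⟩
end

section
/- Let A = B ⊕ V be a ℤ/2-graded K-algebra with even part B and odd part V, and let τ be the parity involution of A. Then the map β : A ⊗_B A → A × A, a ⊗ a′ ↦ (a · a′, a · τ(a′)), is bijective if and only if the multiplication-induced map μ : V ⊗_B V → B is bijective. (The map β is the canonical Galois map for the ℤ/2-action generated by τ, whose invariant subalgebra is B, under the identification of functions ℤ/2 → A with A × A.) -/
open scoped TensorProduct

/-- The relative tensor product `A ⊗_B A` over the even part `B` of a graded algebra,
realized as the quotient of `A ⊗_K A` by the `K`-span of the balancing relators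
`(a·b) ⊗ a' - a ⊗ (b·a')` for `b ∈ B`. -/
noncomputable abbrev grTensorA (K A : Type) [Field K] [Ring A] [Algebra K A]
    (B : Submodule K A) : Type :=
  (TensorProduct K A A) ⧸ (Submodule.span K {x : TensorProduct K A A |
    ∃ (a a' b : A) (_ : b ∈ B), x = (a * b) ⊗ₜ[K] a' - a ⊗ₜ[K] (b * a')})

/-- The relative tensor product `V ⊗_B V` of the odd part `V` with itself over the even
part `B`, realized as the quotient of `V ⊗_K V` by the `K`-span of the balancing relators
`(v·b) ⊗ v' - v ⊗ (b·v')` for `b ∈ B`. -/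
noncomputable abbrev grTensorV (K A : Type) [Field K] [Ring A] [Algebra K A]
    (B V : Submodule K A) : Type :=
  @HasQuotient.Quotient _ _ Submodule.hasQuotient (Submodule.span K {x : TensorProduct K V V |
    ∃ (v v' b : A) (hv : v ∈ V) (hv' : v' ∈ V) (_ : b ∈ B) (hvb : v * b ∈ V)
      (hbv' : b * v' ∈ V),
      x = (⟨v * b, hvb⟩ : V) ⊗ₜ[K] (⟨v', hv'⟩ : V)
            - (⟨v, hv⟩ : V) ⊗ₜ[K] (⟨b * v', hbv'⟩ : V)})

open Submodule LinearMap Function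

namespace SG

/-- The relator submodule for `grTensorA`. -/
noncomputable abbrev relA (K A : Type) [Field K] [Ring A] [Algebra K A]
    (B : Submodule K A) : Submodule K (TensorProduct K A A) :=
  Submodule.span K {x : TensorProduct K A A |
    ∃ (a a' b : A) (_ : b ∈ B), x = (a * b) ⊗ₜ[K] a' - a ⊗ₜ[K] (b * a')}

/-- The relator submodule for `grTensorV`. -/
noncomputable abbrev relV (K A : Type) [Field K] [Ring A] [Algebra K A]
    (B V : Submodule K A) : Submodule K (TensorProduct K V V) :=
  Submodule.span K {x : TensorProduct K V V |
    ∃ (v v' b : A) (hv : v ∈ V) (hv' : v' ∈ V) (_ : b ∈ B) (hvb : v * b ∈ V)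
      (hbv' : b * v' ∈ V),
      x = (⟨v * b, hvb⟩ : V) ⊗ₜ[K] (⟨v', hv'⟩ : V)
            - (⟨v, hv⟩ : V) ⊗ₜ[K] (⟨b * v', hbv'⟩ : V)}

variable {K A : Type} [Field K] [Ring A] [Algebra K A] {B V : Submodule K A}

noncomputable def pB (hcompl : IsCompl B V) : A →ₗ[K] B :=
  B.projectionOnto V hcompl

noncomputable def pV (hcompl : IsCompl B V) : A →ₗ[K] V :=
  V.projectionOnto B hcompl.symm

lemma proj_add (hcompl : IsCompl B V) (a : A) :
    (pB hcompl a : A) + (pV hcompl a : A) = a :=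
  Submodule.projection_add_projection_eq_self hcompl a

lemma pB_of_mem (hcompl : IsCompl B V) {a : A} (h : a ∈ B) : (pB hcompl a : A) = a :=
  congrArg Subtype.val (Submodule.projectionOnto_apply_left hcompl ⟨a, h⟩)

lemma pB_of_mem' (hcompl : IsCompl B V) {a : A} (h : a ∈ V) : pB hcompl a = 0 :=
  Submodule.projectionOnto_apply_of_mem_right hcompl h

lemma pV_of_mem (hcompl : IsCompl B V) {a : A} (h : a ∈ V) : (pV hcompl a : A) = a :=
  congrArg Subtype.val (Submodule.projectionOnto_apply_left hcompl.symm ⟨a, h⟩)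

lemma pV_of_mem' (hcompl : IsCompl B V) {a : A} (h : a ∈ B) : pV hcompl a = 0 :=
  Submodule.projectionOnto_apply_of_mem_right hcompl.symm h

lemma pB_add (hcompl : IsCompl B V) {x y : A} (hx : x ∈ B) (hy : y ∈ V) :
    (pB hcompl (x + y) : A) = x := by
  rw [map_add, Submodule.coe_add, pB_of_mem hcompl hx, pB_of_mem' hcompl hy,
    Submodule.coe_zero, add_zero]

lemma pV_add (hcompl : IsCompl B V) {x y : A} (hx : x ∈ B) (hy : y ∈ V) :
    (pV hcompl (x + y) : A) = y := by
  rw [map_add, Submodule.coe_add, pV_of_mem hcompl hy, pV_of_mem' hcompl hx,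
    Submodule.coe_zero, zero_add]


lemma pB_mul_left (hBB : ∀ b ∈ B, ∀ b' ∈ B, b * b' ∈ B)
    (hBV : ∀ b ∈ B, ∀ v ∈ V, b * v ∈ V) (hcompl : IsCompl B V) {b : A} (hb : b ∈ B) (a : A) :
    (pB hcompl (b * a) : A) = b * pB hcompl a := by
  have h : b * a = b * (pB hcompl a : A) + b * (pV hcompl a : A) := by
    rw [← mul_add, proj_add]
  rw [h, pB_add hcompl (hBB b hb _ (pB hcompl a).2) (hBV b hb _ (pV hcompl a).2)]

lemma pV_mul_left (hBB : ∀ b ∈ B, ∀ b' ∈ B, b * b' ∈ B)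
    (hBV : ∀ b ∈ B, ∀ v ∈ V, b * v ∈ V) (hcompl : IsCompl B V) {b : A} (hb : b ∈ B) (a : A) :
    (pV hcompl (b * a) : A) = b * pV hcompl a := by
  have h : b * a = b * (pB hcompl a : A) + b * (pV hcompl a : A) := by
    rw [← mul_add, proj_add]
  rw [h, pV_add hcompl (hBB b hb _ (pB hcompl a).2) (hBV b hb _ (pV hcompl a).2)]

lemma pB_mul_right (hBB : ∀ b ∈ B, ∀ b' ∈ B, b * b' ∈ B)
    (hVB : ∀ v ∈ V, ∀ b ∈ B, v * b ∈ V) (hcompl : IsCompl B V) (a : A) {b : A} (hb : b ∈ B) :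
    (pB hcompl (a * b) : A) = (pB hcompl a : A) * b := by
  have h : a * b = (pB hcompl a : A) * b + (pV hcompl a : A) * b := by
    rw [← add_mul, proj_add]
  rw [h, pB_add hcompl (hBB _ (pB hcompl a).2 b hb) (hVB _ (pV hcompl a).2 b hb)]

lemma pV_mul_right (hBB : ∀ b ∈ B, ∀ b' ∈ B, b * b' ∈ B)
    (hVB : ∀ v ∈ V, ∀ b ∈ B, v * b ∈ V) (hcompl : IsCompl B V) (a : A) {b : A} (hb : b ∈ B) :
    (pV hcompl (a * b) : A) = (pV hcompl a : A) * b := by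
  have h : a * b = (pB hcompl a : A) * b + (pV hcompl a : A) * b := by
    rw [← add_mul, proj_add]
  rw [h, pV_add hcompl (hBB _ (pB hcompl a).2 b hb) (hVB _ (pV hcompl a).2 b hb)]

lemma tau_mul_left (hBB : ∀ b ∈ B, ∀ b' ∈ B, b * b' ∈ B)
    (hBV : ∀ b ∈ B, ∀ v ∈ V, b * v ∈ V) (hcompl : IsCompl B V) (τ : A →ₗ[K] A) (hτB : ∀ b ∈ B, τ b = b) (hτV : ∀ v ∈ V, τ v = -v)
    {b : A} (hb : b ∈ B) (a : A) : τ (b * a) = b * τ a := by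
  have h : b * a = b * (pB hcompl a : A) + b * (pV hcompl a : A) := by
    rw [← mul_add, proj_add]
  have h2 : τ a = (pB hcompl a : A) - (pV hcompl a : A) := by
    conv_lhs => rw [← proj_add hcompl a]
    rw [map_add, hτB _ (pB hcompl a).2, hτV _ (pV hcompl a).2, ← sub_eq_add_neg]
  rw [h, map_add, hτB _ (hBB b hb _ (pB hcompl a).2), hτV _ (hBV b hb _ (pV hcompl a).2),
    h2, mul_sub, sub_eq_add_neg]


section Defs

variable (hcompl : IsCompl B V)

/-- split of a simple tensor according to the decomposition. -/
lemma split_tmul (a a' : A) :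
    (a ⊗ₜ[K] a' : TensorProduct K A A) =
      a ⊗ₜ[K] (pB hcompl a' : A) +
        ((pB hcompl a : A) ⊗ₜ[K] (pV hcompl a' : A)
          + (pV hcompl a : A) ⊗ₜ[K] (pV hcompl a' : A)) := by
  conv_lhs => rw [← proj_add hcompl a', TensorProduct.tmul_add]
  congr 1
  conv_lhs => rw [← proj_add hcompl a, TensorProduct.add_tmul]

noncomputable def betaBil (τ : A →ₗ[K] A) : A →ₗ[K] A →ₗ[K] A × A :=
  LinearMap.mk₂ K (fun a a' => (a * a', a * τ a'))
    (fun m₁ m₂ n => by simp [add_mul])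
    (fun c m n => by simp [smul_mul_assoc])
    (fun m n₁ n₂ => by simp [mul_add])
    (fun c m n => by simp [mul_smul_comm])

noncomputable def betaMap (hBB : ∀ b ∈ B, ∀ b' ∈ B, b * b' ∈ B)
    (hBV : ∀ b ∈ B, ∀ v ∈ V, b * v ∈ V) (τ : A →ₗ[K] A)
    (hτB : ∀ b ∈ B, τ b = b) (hτV : ∀ v ∈ V, τ v = -v) :
    grTensorA K A B →ₗ[K] A × A :=
  Submodule.liftQ _ (TensorProduct.lift (betaBil τ)) (by
    rw [Submodule.span_le]
    rintro x ⟨a, a', b, hb, rfl⟩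
    simp only [SetLike.mem_coe, LinearMap.mem_ker, map_sub, TensorProduct.lift.tmul,
      betaBil, LinearMap.mk₂_apply]
    rw [tau_mul_left hBB hBV hcompl τ hτB hτV hb, mul_assoc, mul_assoc, sub_self])

lemma betaMap_mk (hBB : ∀ b ∈ B, ∀ b' ∈ B, b * b' ∈ B)
    (hBV : ∀ b ∈ B, ∀ v ∈ V, b * v ∈ V) (τ : A →ₗ[K] A)
    (hτB : ∀ b ∈ B, τ b = b) (hτV : ∀ v ∈ V, τ v = -v) (a a' : A) :
    betaMap hcompl hBB hBV τ hτB hτV (Submodule.Quotient.mk (a ⊗ₜ[K] a'))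
      = (a * a', a * τ a') := rfl

noncomputable def muBil (hVV : ∀ v ∈ V, ∀ v' ∈ V, v * v' ∈ B) : V →ₗ[K] V →ₗ[K] B :=
  LinearMap.mk₂ K (fun v v' => ⟨(v : A) * (v' : A), hVV _ v.2 _ v'.2⟩)
    (fun m₁ m₂ n => Subtype.ext (by simp [add_mul]))
    (fun c m n => Subtype.ext (by simp [smul_mul_assoc]))
    (fun m n₁ n₂ => Subtype.ext (by simp [mul_add]))
    (fun c m n => Subtype.ext (by simp [mul_smul_comm]))

noncomputable def muMap (hVV : ∀ v ∈ V, ∀ v' ∈ V, v * v' ∈ B) :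
    grTensorV K A B V →ₗ[K] B :=
  Submodule.liftQ _ (TensorProduct.lift (muBil hVV)) (by
    rw [Submodule.span_le]
    rintro x ⟨v, v', b, hv, hv', hb, hvb, hbv', rfl⟩
    simp only [SetLike.mem_coe, LinearMap.mem_ker, map_sub, TensorProduct.lift.tmul,
      muBil, LinearMap.mk₂_apply]
    rw [sub_eq_zero]
    exact Subtype.ext (mul_assoc v b v'))

lemma muMap_mk (hVV : ∀ v ∈ V, ∀ v' ∈ V, v * v' ∈ B) (v v' : V) :
    muMap hVV (Submodule.Quotient.mk (v ⊗ₜ[K] v')) = ⟨(v : A) * (v' : A), hVV _ v.2 _ v'.2⟩ :=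
  rfl

noncomputable def phiBil (hBV : ∀ b ∈ B, ∀ v ∈ V, b * v ∈ V) :
    A →ₗ[K] A →ₗ[K] A × (V × grTensorV K A B V) :=
  LinearMap.mk₂ K (fun a a' =>
    (a * (pB hcompl a' : A),
      (⟨(pB hcompl a : A) * (pV hcompl a' : A), hBV _ (pB hcompl a).2 _ (pV hcompl a').2⟩,
        Submodule.Quotient.mk (pV hcompl a ⊗ₜ[K] pV hcompl a'))))
    (fun m₁ m₂ n => by
      refine Prod.ext ?_ (Prod.ext (Subtype.ext ?_) ?_) <;>
        simp [add_mul, TensorProduct.add_tmul])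
    (fun c m n => by
      refine Prod.ext ?_ (Prod.ext (Subtype.ext ?_) ?_) <;>
        simp [smul_mul_assoc, ← TensorProduct.smul_tmul', Submodule.Quotient.mk_smul])
    (fun m n₁ n₂ => by
      refine Prod.ext ?_ (Prod.ext (Subtype.ext ?_) ?_) <;>
        simp [mul_add, TensorProduct.tmul_add])
    (fun c m n => by
      refine Prod.ext ?_ (Prod.ext (Subtype.ext ?_) ?_) <;>
        simp [mul_smul_comm, TensorProduct.tmul_smul])

noncomputable def phiMap (hBB : ∀ b ∈ B, ∀ b' ∈ B, b * b' ∈ B)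
    (hBV : ∀ b ∈ B, ∀ v ∈ V, b * v ∈ V) (hVB : ∀ v ∈ V, ∀ b ∈ B, v * b ∈ V) :
    grTensorA K A B →ₗ[K] A × (V × grTensorV K A B V) :=
  Submodule.liftQ _ (TensorProduct.lift (phiBil hcompl hBV)) (by
    rw [Submodule.span_le]
    rintro x ⟨a, a', b, hb, rfl⟩
    simp only [SetLike.mem_coe, LinearMap.mem_ker, map_sub, TensorProduct.lift.tmul,
      phiBil, LinearMap.mk₂_apply]
    rw [sub_eq_zero]
    refine Prod.ext ?_ (Prod.ext (Subtype.ext ?_) ?_)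
    · show (a * b) * (pB hcompl a' : A) = a * (pB hcompl (b * a') : A)
      rw [pB_mul_left hBB hBV hcompl hb, mul_assoc]
    · show (pB hcompl (a * b) : A) * (pV hcompl a' : A)
        = (pB hcompl a : A) * (pV hcompl (b * a') : A)
      rw [pB_mul_right hBB hVB hcompl a hb, pV_mul_left hBB hBV hcompl hb, mul_assoc]
    · show (Submodule.Quotient.mk (pV hcompl (a * b) ⊗ₜ[K] pV hcompl a')
          : grTensorV K A B V)
        = Submodule.Quotient.mk (pV hcompl a ⊗ₜ[K] pV hcompl (b * a'))
      have e1 : pV hcompl (a * b)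
          = (⟨(pV hcompl a : A) * b, hVB _ (pV hcompl a).2 b hb⟩ : V) :=
        Subtype.ext (pV_mul_right hBB hVB hcompl a hb)
      have e2 : pV hcompl (b * a')
          = (⟨b * (pV hcompl a' : A), hBV b hb _ (pV hcompl a').2⟩ : V) :=
        Subtype.ext (pV_mul_left hBB hBV hcompl hb a')
      rw [e1, e2, Submodule.Quotient.eq]
      exact Submodule.subset_span
        ⟨(pV hcompl a : A), (pV hcompl a' : A), b, (pV hcompl a).2,
          (pV hcompl a').2, hb, _, _, rfl⟩)

lemma phiMap_mk (hBB : ∀ b ∈ B, ∀ b' ∈ B, b * b' ∈ B)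
    (hBV : ∀ b ∈ B, ∀ v ∈ V, b * v ∈ V) (hVB : ∀ v ∈ V, ∀ b ∈ B, v * b ∈ V) (a a' : A) :
    phiMap hcompl hBB hBV hVB (Submodule.Quotient.mk (a ⊗ₜ[K] a'))
      = (a * (pB hcompl a' : A),
          (⟨(pB hcompl a : A) * (pV hcompl a' : A),
              hBV _ (pB hcompl a).2 _ (pV hcompl a').2⟩,
            Submodule.Quotient.mk (pV hcompl a ⊗ₜ[K] pV hcompl a'))) := rfl

end Defs

section Psi

variable (K A B V)

noncomputable def psi1 : A →ₗ[K] grTensorA K A B :=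
  ((relA K A B).mkQ).comp ((TensorProduct.mk K A A).flip 1)

noncomputable def psi2 : V →ₗ[K] grTensorA K A B :=
  ((relA K A B).mkQ).comp ((TensorProduct.mk K A A 1).comp V.subtype)

noncomputable def psi3 : grTensorV K A B V →ₗ[K] grTensorA K A B :=
  Submodule.liftQ _ (((relA K A B).mkQ).comp (TensorProduct.map V.subtype V.subtype)) (by
    rw [Submodule.span_le]
    rintro x ⟨v, v', b, hv, hv', hb, hvb, hbv', rfl⟩
    simp only [SetLike.mem_coe, LinearMap.mem_ker, map_sub, LinearMap.comp_apply,
      TensorProduct.map_tmul, Submodule.mkQ_apply, coe_subtype]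
    rw [← Submodule.Quotient.mk_sub, Submodule.Quotient.mk_eq_zero]
    exact Submodule.subset_span ⟨v, v', b, hb, rfl⟩)

noncomputable def psiMap : (A × V × grTensorV K A B V) →ₗ[K] grTensorA K A B :=
  (psi1 K A B).coprod ((psi2 K A B V).coprod (psi3 K A B V))

lemma psi1_apply (a : A) :
    psi1 K A B a = Submodule.Quotient.mk (a ⊗ₜ[K] (1 : A)) := rfl

lemma psi2_apply (v : V) :
    psi2 K A B V v = Submodule.Quotient.mk ((1 : A) ⊗ₜ[K] (v : A)) := rfl

lemma psi3_mk (v v' : V) :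
    psi3 K A B V (Submodule.Quotient.mk (v ⊗ₜ[K] v'))
      = Submodule.Quotient.mk ((v : A) ⊗ₜ[K] (v' : A)) := rfl

lemma psiMap_apply (w : A × V × grTensorV K A B V) :
    psiMap K A B V w = psi1 K A B w.1 + (psi2 K A B V w.2.1 + psi3 K A B V w.2.2) := rfl

end Psi

section Main

variable {K A : Type} [Field K] [Ring A] [Algebra K A] {B V : Submodule K A}

set_option maxHeartbeats 2000000 in
lemma bij_iff [CharZero K] (hcompl : IsCompl B V) (hone : (1 : A) ∈ B)
    (hBB : ∀ b ∈ B, ∀ b' ∈ B, b * b' ∈ B) (hBV : ∀ b ∈ B, ∀ v ∈ V, b * v ∈ V)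
    (hVB : ∀ v ∈ V, ∀ b ∈ B, v * b ∈ V) (hVV : ∀ v ∈ V, ∀ v' ∈ V, v * v' ∈ B)
    (τ : A →ₗ[K] A) (hτB : ∀ b ∈ B, τ b = b) (hτV : ∀ v ∈ V, τ v = -v) :
    Function.Bijective (betaMap hcompl hBB hBV τ hτB hτV)
      ↔ Function.Bijective (muMap hVV) := by
  -- Ψ ∘ Φ = id
  have hΨΦ : ∀ x : grTensorA K A B,
      psiMap K A B V (phiMap hcompl hBB hBV hVB x) = x := by
    intro x
    obtain ⟨z, rfl⟩ := Submodule.Quotient.mk_surjective _ x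
    induction z using TensorProduct.induction_on with
    | zero => simp
    | tmul a a' =>
      have h1 : (Submodule.Quotient.mk ((a * (pB hcompl a' : A)) ⊗ₜ[K] (1 : A))
            : grTensorA K A B)
          = Submodule.Quotient.mk (a ⊗ₜ[K] (pB hcompl a' : A)) := by
        rw [Submodule.Quotient.eq]
        refine Submodule.subset_span ⟨a, 1, (pB hcompl a' : A), (pB hcompl a').2, ?_⟩
        rw [mul_one]
      have m2 : (((1 : A) * (pB hcompl a : A)) ⊗ₜ[K] (pV hcompl a' : A)
            - (1 : A) ⊗ₜ[K] ((pB hcompl a : A) * (pV hcompl a' : A))) ∈ relA K A B :=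
        Submodule.subset_span
          ⟨1, (pV hcompl a' : A), (pB hcompl a : A), (pB hcompl a).2, rfl⟩
      rw [one_mul] at m2
      have h2 : (Submodule.Quotient.mk
            ((1 : A) ⊗ₜ[K] ((pB hcompl a : A) * (pV hcompl a' : A))) : grTensorA K A B)
          = Submodule.Quotient.mk ((pB hcompl a : A) ⊗ₜ[K] (pV hcompl a' : A)) :=
        ((Submodule.Quotient.eq _).2 m2).symm
      show (Submodule.Quotient.mk ((a * (pB hcompl a' : A)) ⊗ₜ[K] (1 : A))
            : grTensorA K A B)
          + (Submodule.Quotient.mk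
              ((1 : A) ⊗ₜ[K] ((pB hcompl a : A) * (pV hcompl a' : A)))
            + Submodule.Quotient.mk ((pV hcompl a : A) ⊗ₜ[K] (pV hcompl a' : A)))
          = Submodule.Quotient.mk (a ⊗ₜ[K] a')
      rw [h1, h2, ← Submodule.Quotient.mk_add, ← Submodule.Quotient.mk_add,
        ← split_tmul hcompl a a']
    | add u w hu hw =>
      rw [Submodule.Quotient.mk_add, map_add, map_add, hu, hw]
  -- Φ ∘ Ψ = id
  have c1 : ∀ x : A, phiMap hcompl hBB hBV hVB (psi1 K A B x) = (x, 0, 0) := by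
    intro x
    rw [psi1_apply, phiMap_mk]
    simp [pB_of_mem hcompl hone, pV_of_mem' hcompl hone]
  have c2 : ∀ v : V, phiMap hcompl hBB hBV hVB (psi2 K A B V v) = (0, v, 0) := by
    intro v
    rw [psi2_apply, phiMap_mk]
    simp [pB_of_mem hcompl hone, pV_of_mem' hcompl hone, pB_of_mem' hcompl v.2,
      pV_of_mem hcompl v.2]
  have c3 : ∀ t : grTensorV K A B V,
      phiMap hcompl hBB hBV hVB (psi3 K A B V t) = (0, 0, t) := by
    intro t
    obtain ⟨z, rfl⟩ := Submodule.Quotient.mk_surjective _ t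
    induction z using TensorProduct.induction_on with
    | zero => simp; rfl
    | tmul x y =>
      have ex : pV hcompl (x : A) = x := Subtype.ext (pV_of_mem hcompl x.2)
      have ey : pV hcompl (y : A) = y := Subtype.ext (pV_of_mem hcompl y.2)
      rw [psi3_mk, phiMap_mk]
      simp [pB_of_mem' hcompl x.2, pB_of_mem' hcompl y.2, ex, ey]
    | add u w hu hw =>
      rw [Submodule.Quotient.mk_add, map_add, map_add, hu, hw]
      simp
  have hΦΨ : ∀ w : A × V × grTensorV K A B V,
      phiMap hcompl hBB hBV hVB (psiMap K A B V w) = w := by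
    rintro ⟨x, v, t⟩
    rw [psiMap_apply, map_add, map_add, c1, c2, c3]
    simp
  have hΨbij : Function.Bijective (psiMap K A B V) :=
    ⟨fun a b h => by rw [← hΦΨ a, ← hΦΨ b, h], fun x => ⟨phiMap hcompl hBB hBV hVB x, hΨΦ x⟩⟩
  have hτ1 : τ (1 : A) = 1 := hτB 1 hone
  -- β on psi3
  have hb3 : ∀ t : grTensorV K A B V,
      betaMap hcompl hBB hBV τ hτB hτV (psi3 K A B V t)
        = ((muMap hVV t : A), -(muMap hVV t : A)) := by
    intro t
    obtain ⟨z, rfl⟩ := Submodule.Quotient.mk_surjective _ t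
    induction z using TensorProduct.induction_on with
    | zero => simp; rfl
    | tmul x y =>
      rw [psi3_mk, betaMap_mk, muMap_mk, hτV _ y.2, mul_neg]
    | add u w hu hw =>
      rw [Submodule.Quotient.mk_add, map_add, map_add, hu, hw, map_add]
      simp [Prod.mk_add_mk]
      abel
  -- β ∘ Ψ explicitly
  have hbψ : ∀ w : A × V × grTensorV K A B V,
      betaMap hcompl hBB hBV τ hτB hτV (psiMap K A B V w)
        = ((w.1 + (w.2.1 : A)) + (muMap hVV w.2.2 : A),
            (w.1 - (w.2.1 : A)) - (muMap hVV w.2.2 : A)) := by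
    rintro ⟨x, v, t⟩
    rw [psiMap_apply, map_add, map_add, hb3, psi1_apply, psi2_apply, betaMap_mk,
      betaMap_mk, hτ1, hτV _ v.2]
    simp only [mul_one, one_mul, mul_neg, Prod.mk_add_mk, Prod.mk.injEq, Prod.fst, Prod.snd]
    exact ⟨by abel, by abel⟩
  -- the doubling equivalence on A × A
  have h2 : (2 : K) ≠ 0 := by norm_num
  have he2 : Function.Bijective (fun p : A × A => (p.1 + p.2, p.1 - p.2)) := by
    constructor
    · intro p q h
      have ha : p.1 + p.2 = q.1 + q.2 := congrArg Prod.fst h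
      have hb : p.1 - p.2 = q.1 - q.2 := congrArg Prod.snd h
      have hx : (2 : K) • p.1 = (2 : K) • q.1 := by
        rw [two_smul, two_smul]
        calc p.1 + p.1 = (p.1 + p.2) + (p.1 - p.2) := by abel
          _ = (q.1 + q.2) + (q.1 - q.2) := by rw [ha, hb]
          _ = q.1 + q.1 := by abel
      have hy : (2 : K) • p.2 = (2 : K) • q.2 := by
        rw [two_smul, two_smul]
        calc p.2 + p.2 = (p.1 + p.2) - (p.1 - p.2) := by abel
          _ = (q.1 + q.2) - (q.1 - q.2) := by rw [ha, hb]
          _ = q.2 + q.2 := by abel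
      have hx' : p.1 = q.1 := by
        have := congrArg (fun z => (2 : K)⁻¹ • z) hx
        simpa [smul_smul, inv_mul_cancel₀ h2] using this
      have hy' : p.2 = q.2 := by
        have := congrArg (fun z => (2 : K)⁻¹ • z) hy
        simpa [smul_smul, inv_mul_cancel₀ h2] using this
      exact Prod.ext hx' hy'
    · intro p
      refine ⟨((2 : K)⁻¹ • (p.1 + p.2), (2 : K)⁻¹ • (p.1 - p.2)), ?_⟩
      have e1 : (p.1 + p.2) + (p.1 - p.2) = (2 : K) • p.1 := by
        rw [two_smul]; abel
      have e2 : (p.1 + p.2) - (p.1 - p.2) = (2 : K) • p.2 := by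
        rw [two_smul]; abel
      refine Prod.ext ?_ ?_
      · show (2 : K)⁻¹ • (p.1 + p.2) + (2 : K)⁻¹ • (p.1 - p.2) = p.1
        rw [← smul_add, e1, smul_smul, inv_mul_cancel₀ h2, one_smul]
      · show (2 : K)⁻¹ • (p.1 + p.2) - (2 : K)⁻¹ • (p.1 - p.2) = p.2
        rw [← smul_sub, e2, smul_smul, inv_mul_cancel₀ h2, one_smul]
  -- the middle map
  have hfun : ⇑(betaMap hcompl hBB hBV τ hτB hτV) ∘ ⇑(psiMap K A B V)
      = (fun p : A × A => (p.1 + p.2, p.1 - p.2))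
        ∘ (Prod.map (_root_.id : A → A)
            (fun p : V × grTensorV K A B V => (p.1 : A) + (muMap hVV p.2 : A))) := by
    funext w
    show betaMap hcompl hBB hBV τ hτB hτV (psiMap K A B V w) = _
    rw [hbψ]
    refine Prod.ext ?_ ?_
    · show (w.1 + (w.2.1 : A)) + (muMap hVV w.2.2 : A)
        = w.1 + ((w.2.1 : A) + (muMap hVV w.2.2 : A))
      abel
    · show (w.1 - (w.2.1 : A)) - (muMap hVV w.2.2 : A)
        = w.1 - ((w.2.1 : A) + (muMap hVV w.2.2 : A))
      abel
  haveI : Nonempty A := ⟨0⟩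
  haveI : Nonempty (V × grTensorV K A B V) := ⟨0⟩
  haveI : Nonempty V := ⟨0⟩
  haveI : Nonempty (grTensorV K A B V) := ⟨0⟩
  have step1 : Function.Bijective (betaMap hcompl hBB hBV τ hτB hτV)
      ↔ Function.Bijective (⇑(betaMap hcompl hBB hBV τ hτB hτV) ∘ ⇑(psiMap K A B V)) :=
    (Function.Bijective.of_comp_iff _ hΨbij).symm
  rw [step1, hfun, Function.Bijective.of_comp_iff' he2, Prod.map_bijective]
  simp only [Function.bijective_id, true_and]
  -- now: Bijective (fun p => ↑p.1 + ↑(μ p.2)) ↔ Bijective μ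
  have hH : (fun p : V × grTensorV K A B V => (p.1 : A) + (muMap hVV p.2 : A))
      = ⇑(Submodule.prodEquivOfIsCompl B V hcompl)
        ∘ ((Prod.map (⇑(muMap hVV)) (_root_.id : V → V)) ∘ Prod.swap) := by
    funext p
    show (p.1 : A) + (muMap hVV p.2 : A)
      = Submodule.prodEquivOfIsCompl B V hcompl (muMap hVV p.2, p.1)
    rw [Submodule.coe_prodEquivOfIsCompl']
    exact add_comm _ _
  rw [hH, Function.Bijective.of_comp_iff' (Submodule.prodEquivOfIsCompl B V hcompl).bijective,
    Function.Bijective.of_comp_iff _ Prod.swap_bijective, Prod.map_bijective]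
  simp [Function.bijective_id]

end Main

end SG

/-- For a `ℤ/2`-graded `K`-algebra `A = B ⊕ V` with parity involution `τ`,
the canonical Galois map `β : A ⊗_B A → A × A`, `a ⊗ a' ↦ (a·a', a·τ(a'))`, is bijective if
and only if the multiplication-induced map `μ : V ⊗_B V → B` is bijective. -/
theorem stmt_9 (K A : Type) [Field K] [CharZero K] [Ring A] [Algebra K A]
    (B V : Submodule K A) (hcompl : IsCompl B V) (hone : (1 : A) ∈ B)
    (hBB : ∀ b ∈ B, ∀ b' ∈ B, b * b' ∈ B) (hBV : ∀ b ∈ B, ∀ v ∈ V, b * v ∈ V)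
    (hVB : ∀ v ∈ V, ∀ b ∈ B, v * b ∈ V) (hVV : ∀ v ∈ V, ∀ v' ∈ V, v * v' ∈ B)
    (τ : A →ₗ[K] A) (hτB : ∀ b ∈ B, τ b = b) (hτV : ∀ v ∈ V, τ v = -v) :
    ∃ (β : grTensorA K A B →ₗ[K] A × A) (μ : grTensorV K A B V →ₗ[K] B),
      (∀ a a' : A, β (Submodule.Quotient.mk (a ⊗ₜ[K] a')) = (a * a', a * τ a')) ∧
      (∀ (v v' : A) (hv : v ∈ V) (hv' : v' ∈ V) (h : v * v' ∈ B),
        μ (Submodule.Quotient.mk ((⟨v, hv⟩ : V) ⊗ₜ[K] (⟨v', hv'⟩ : V))) = ⟨v * v', h⟩) ∧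
      (Function.Bijective β ↔ Function.Bijective μ) := by
  exact ⟨SG.betaMap hcompl hBB hBV τ hτB hτV, SG.muMap hVV,
    fun a a' => rfl, fun v v' hv hv' h => rfl,
    SG.bij_iff hcompl hone hBB hBV hVB hVV τ hτB hτV⟩
end

section
/- Let A = B ⊕ V be a ℤ/2-graded K-algebra with even part B and odd part V, and let τ be the parity involution of A. Suppose there exist odd elements φ₁, φ₂ ∈ V and a nonzero scalar c ∈ K such that φ₁φ₂ − φ₂φ₁ = c·1 in A. Then the extension B ⊆ A is O(ℤ/2)-Hopf-Galois for the ℤ/2-action generated by τ: the map β : A ⊗_B A → A × A, a ⊗ a′ ↦ (a · a′, a · τ(a′)), is bijective. -/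
open scoped TensorProduct

/-- For a `ℤ/2`-graded `K`-algebra `A = B ⊕ V` with parity involution `τ`
and odd elements `φ₁, φ₂ ∈ V` with `φ₁φ₂ - φ₂φ₁ = c·1` for a nonzero scalar `c`, the
extension `B ⊆ A` is `O(ℤ/2)`-Hopf-Galois: the canonical Galois map
`β : A ⊗_B A → A × A`, `a ⊗ a' ↦ (a·a', a·τ(a'))`, is bijective. -/
theorem stmt_12 (K A : Type) [Field K] [CharZero K] [Ring A] [Algebra K A]
    (B V : Submodule K A) (hcompl : IsCompl B V) (hone : (1 : A) ∈ B)
    (hBB : ∀ b ∈ B, ∀ b' ∈ B, b * b' ∈ B) (hBV : ∀ b ∈ B, ∀ v ∈ V, b * v ∈ V)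
    (hVB : ∀ v ∈ V, ∀ b ∈ B, v * b ∈ V) (hVV : ∀ v ∈ V, ∀ v' ∈ V, v * v' ∈ B)
    (τ : A →ₗ[K] A) (hτB : ∀ b ∈ B, τ b = b) (hτV : ∀ v ∈ V, τ v = -v)
    (φ₁ φ₂ : A) (hφ₁ : φ₁ ∈ V) (hφ₂ : φ₂ ∈ V) (c : K) (hc : c ≠ 0)
    (hcomm : φ₁ * φ₂ - φ₂ * φ₁ = algebraMap K A c) :
    ∃ β : grTensorA K A B →ₗ[K] A × A,
      (∀ a a' : A, β (Submodule.Quotient.mk (a ⊗ₜ[K] a')) = (a * a', a * τ a')) ∧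
      Function.Bijective β := by
  classical
  set ψ : A := c⁻¹ • φ₂ with hψdef
  have hψV : ψ ∈ V := V.smul_mem _ hφ₂
  have hkey : φ₁ * ψ - ψ * φ₁ = 1 := by
    rw [hψdef, mul_smul_comm, smul_mul_assoc, ← smul_sub, hcomm,
      Algebra.algebraMap_eq_smul_one, smul_smul, inv_mul_cancel₀ hc, one_smul]
  have hτone : τ 1 = 1 := hτB 1 hone
  have hdecomp : ∀ a : A, ∃ p ∈ B, ∃ q ∈ V, a = p + q := by
    intro a
    have ha : a ∈ B ⊔ V := by rw [hcompl.sup_eq_top]; trivial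
    obtain ⟨p, hp, q, hq, hpq⟩ := Submodule.mem_sup.mp ha
    exact ⟨p, hp, q, hq, hpq.symm⟩
  have hτmul : ∀ b ∈ B, ∀ x : A, τ (b * x) = b * τ x := by
    intro b hb x
    obtain ⟨p, hp, q, hq, rfl⟩ := hdecomp x
    rw [mul_add, map_add, map_add, hτB _ hp, hτV _ hq,
      hτB _ (hBB b hb p hp), hτV _ (hBV b hb q hq)]
    rw [mul_add, mul_neg]
  -- the bilinear map
  let f : A →ₗ[K] A →ₗ[K] A × A := LinearMap.mk₂ K (fun a a' => (a * a', a * τ a'))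
    (fun m₁ m₂ n => by simp [add_mul, Prod.mk_add_mk])
    (fun k m n => by simp [smul_mul_assoc, Prod.smul_mk])
    (fun m n₁ n₂ => by simp [mul_add, Prod.mk_add_mk])
    (fun k m n => by simp [mul_smul_comm, Prod.smul_mk])
  let β₀ : TensorProduct K A A →ₗ[K] A × A := TensorProduct.lift f
  have hβ₀ : ∀ a a' : A, β₀ (a ⊗ₜ[K] a') = (a * a', a * τ a') := fun a a' => rfl
  set S : Set (TensorProduct K A A) := {x : TensorProduct K A A |
    ∃ (a a' b : A) (_ : b ∈ B), x = (a * b) ⊗ₜ[K] a' - a ⊗ₜ[K] (b * a')} with hSdef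
  have hker : Submodule.span K S ≤ LinearMap.ker β₀ := by
    rw [Submodule.span_le]
    rintro x ⟨a, a', b, hb, rfl⟩
    simp only [SetLike.mem_coe, LinearMap.mem_ker, map_sub, hβ₀]
    rw [hτmul b hb a', mul_assoc, mul_assoc, sub_self]
  let β : grTensorA K A B →ₗ[K] A × A := Submodule.liftQ _ β₀ hker
  have hβ : ∀ a a' : A, β (Submodule.Quotient.mk (a ⊗ₜ[K] a')) = (a * a', a * τ a') :=
    fun a a' => rfl
  -- the inverse map γ
  let mkq : TensorProduct K A A →ₗ[K] grTensorA K A B := Submodule.mkQ _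
  have hrel : ∀ (a a' b : A), b ∈ B → mkq ((a * b) ⊗ₜ[K] a') = mkq (a ⊗ₜ[K] (b * a')) := by
    intro a a' b hb
    rw [← sub_eq_zero, ← map_sub]
    exact (Submodule.Quotient.mk_eq_zero _).mpr (Submodule.subset_span ⟨a, a', b, hb, rfl⟩)
  let T : A →ₗ[K] A →ₗ[K] TensorProduct K A A := TensorProduct.mk K A A
  let g1 : A →ₗ[K] grTensorA K A B := mkq ∘ₗ T.flip 1
  let g2 : A →ₗ[K] grTensorA K A B := mkq ∘ₗ T.flip ψ ∘ₗ LinearMap.mulRight K φ₁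
  let g3 : A →ₗ[K] grTensorA K A B := mkq ∘ₗ T.flip φ₁ ∘ₗ LinearMap.mulRight K ψ
  let P : A × A →ₗ[K] A := LinearMap.fst K A A + LinearMap.snd K A A
  let Q : A × A →ₗ[K] A := LinearMap.fst K A A - LinearMap.snd K A A
  let γ : A × A →ₗ[K] grTensorA K A B :=
    ((2:K)⁻¹) • (g1 ∘ₗ P + g2 ∘ₗ Q - g3 ∘ₗ Q)
  have hγ : ∀ x y : A, γ (x, y) = (2:K)⁻¹ •
      (mkq ((x + y) ⊗ₜ[K] 1) + mkq (((x - y) * φ₁) ⊗ₜ[K] ψ) - mkq (((x - y) * ψ) ⊗ₜ[K] φ₁)) := by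
    intro x y
    simp only [γ, g1, g2, g3, P, Q, T, LinearMap.smul_apply, LinearMap.sub_apply,
      LinearMap.add_apply, LinearMap.comp_apply, LinearMap.fst_apply, LinearMap.snd_apply,
      LinearMap.flip_apply, TensorProduct.mk_apply, LinearMap.mulRight_apply]
  have h2 : (2:K) ≠ 0 := two_ne_zero
  -- left inverse on generators
  have hleft : ∀ a a' : A, γ (β (mkq (a ⊗ₜ[K] a'))) = mkq (a ⊗ₜ[K] a') := by
    intro a a'
    obtain ⟨p, hp, q, hq, rfl⟩ := hdecomp a'
    have hτa' : τ (p + q) = p - q := by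
      rw [map_add, hτB _ hp, hτV _ hq, sub_eq_add_neg]
    rw [show β (mkq (a ⊗ₜ[K] (p+q))) = (a * (p+q), a * τ (p+q)) from rfl, hτa', hγ]
    have e1 : a * (p + q) + a * (p - q) = (2:K) • (a * p) := by
      rw [← mul_add, two_smul, ← mul_add]; congr 1; abel
    have e2 : a * (p + q) - a * (p - q) = (2:K) • (a * q) := by
      rw [← mul_sub, two_smul, ← mul_add]; congr 1; abel
    rw [e1, e2, smul_mul_assoc, smul_mul_assoc]
    simp only [← TensorProduct.smul_tmul', map_smul]
    rw [← smul_add, ← smul_sub, smul_smul, inv_mul_cancel₀ h2, one_smul]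
    rw [mul_assoc a q φ₁, mul_assoc a q ψ]
    rw [hrel a 1 p hp, hrel a ψ (q * φ₁) (hVV q hq φ₁ hφ₁),
      hrel a φ₁ (q * ψ) (hVV q hq ψ hψV)]
    rw [← map_add, ← map_sub, ← TensorProduct.tmul_add, ← TensorProduct.tmul_sub]
    congr 1
    rw [mul_one, mul_assoc, mul_assoc, add_sub_assoc, ← mul_sub, hkey, mul_one]
  -- right inverse
  have hright : ∀ z : A × A, β (γ z) = z := by
    rintro ⟨x, y⟩
    rw [hγ, map_smul, map_sub, map_add]
    rw [show β (mkq ((x + y) ⊗ₜ[K] 1)) = ((x+y) * 1, (x+y) * τ 1) from rfl]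
    rw [show β (mkq (((x - y) * φ₁) ⊗ₜ[K] ψ)) = ((x-y) * φ₁ * ψ, (x-y) * φ₁ * τ ψ) from rfl]
    rw [show β (mkq (((x - y) * ψ) ⊗ₜ[K] φ₁)) = ((x-y) * ψ * φ₁, (x-y) * ψ * τ φ₁) from rfl]
    rw [hτone, hτV _ hψV, hτV _ hφ₁]
    have c1 : (x+y) * 1 + (x-y) * φ₁ * ψ - (x-y) * ψ * φ₁ = (2:K) • x := by
      rw [mul_one, mul_assoc, mul_assoc, add_sub_assoc, ← mul_sub, hkey, mul_one, two_smul]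
      abel
    have c2 : (x+y) * 1 + (x-y) * φ₁ * (-ψ) - (x-y) * ψ * (-φ₁) = (2:K) • y := by
      calc (x+y) * 1 + (x-y) * φ₁ * (-ψ) - (x-y) * ψ * (-φ₁)
          = (x+y) - (x-y) * (φ₁ * ψ - ψ * φ₁) := by
            rw [mul_sub]; simp only [mul_one, mul_neg, mul_assoc]; abel
        _ = (2:K) • y := by rw [hkey, mul_one, two_smul]; abel
    have : ((x+y) * 1 + (x-y) * φ₁ * ψ - (x-y) * ψ * φ₁,
            (x+y) * 1 + (x-y) * φ₁ * (-ψ) - (x-y) * ψ * (-φ₁)) = ((2:K) • x, (2:K) • y) := by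
      rw [c1, c2]
    rw [show ((x+y) * 1, (x+y) * 1) + ((x-y) * φ₁ * ψ, (x-y) * φ₁ * (-ψ))
        - ((x-y) * ψ * φ₁, (x-y) * ψ * (-φ₁))
        = ((x+y) * 1 + (x-y) * φ₁ * ψ - (x-y) * ψ * φ₁,
           (x+y) * 1 + (x-y) * φ₁ * (-ψ) - (x-y) * ψ * (-φ₁)) from rfl, this]
    rw [Prod.smul_mk]
    simp [smul_smul, inv_mul_cancel₀ h2]
  have hcomp : γ ∘ₗ β = LinearMap.id := by
    apply Submodule.linearMap_qext
    apply TensorProduct.ext'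
    intro a a'
    simpa [mkq] using hleft a a'
  refine ⟨β, hβ, ?_, fun z => ⟨γ z, hright z⟩⟩
  intro s t hst
  have := congrArg γ hst
  calc s = (γ ∘ₗ β) s := by rw [hcomp]; rfl
    _ = (γ ∘ₗ β) t := this
    _ = t := by rw [hcomp]; rfl
end
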